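/- Let G be a finite group and H a normal subgroup of G. If H is a perfect code in some Cayley graph of G, then for every pair of integers a, b with 0 ≤ a ≤ |H| − 1 and 0 ≤ b ≤ |H| such that gcd(2, |H|−1) divides a, there exists an inverse-closed subset S of G \ {e} such that H is an (a,b)-regular set in Cay(G,S). -/

import Mathlib

/-- The Cayley graph of a group `G` with connection set `S`:
`x` is adjacent to `y` iff `y * x⁻¹ ∈ S` (symmetrized; for inverse-closed `S`
not containing `1` this is the usual Cayley graph). -/
def cayley {G : Type*} [Group G] (S : Set G) : SimpleGraph G :=
  SimpleGraph.fromRel (fun x y => y * x⁻¹ ∈ S)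

/-- `C` is an `(a,b)`-regular set in `Γ`: every vertex in `C` has exactly `a`
neighbors in `C`, and every vertex outside `C` has exactly `b` neighbors in `C`. -/
def IsRegularSet {V : Type*} (Γ : SimpleGraph V) (C : Set V) (a b : ℕ) : Prop :=
  (∀ v ∈ C, (Γ.neighborSet v ∩ C).ncard = a) ∧
  (∀ v ∉ C, (Γ.neighborSet v ∩ C).ncard = b)

lemma invol_subset {γ : Type*} [DecidableEq γ] (ψ : γ → γ) (hψ : ∀ x, ψ (ψ x) = x) :
    ∀ n (s : Finset γ), (∀ x ∈ s, ψ x ∈ s) → n ≤ s.card →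
      (Even n ∨ ∃ x ∈ s, ψ x = x) →
      ∃ t, t ⊆ s ∧ t.card = n ∧ ∀ x ∈ t, ψ x ∈ t := by
  intro n
  induction n using Nat.strong_induction_on with
  | _ n ih =>
    intro s hs hn hpar
    rcases Nat.eq_zero_or_pos n with h0 | hpos
    · exact ⟨∅, by simp [h0]⟩
    rcases Nat.even_or_odd n with he | ho
    · by_cases hall : ∀ y ∈ s, ψ y = y
      · obtain ⟨t, hts, htc⟩ := Finset.exists_subset_card_eq hn
        exact ⟨t, hts, htc, fun x hx => by rw [hall x (hts hx)]; exact hx⟩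
      · push_neg at hall
        obtain ⟨y, hy, hyy⟩ := hall
        have hψy : ψ y ∈ s := hs y hy
        have h2 : 2 ≤ n := by
          rcases he with ⟨k, hk⟩; omega
        have hcard : n - 2 ≤ (s \ {y, ψ y}).card := by
          have : ({y, ψ y} : Finset γ) ⊆ s := by
            intro z hz; simp at hz; rcases hz with h|h <;> simp [h, hy, hψy]
          rw [Finset.card_sdiff_of_subset this]
          have : ({y, ψ y} : Finset γ).card = 2 := by
            rw [Finset.card_insert_of_notMem (by simp [Ne.symm hyy]), Finset.card_singleton]
          omega
        have hinv : ∀ x ∈ s \ {y, ψ y}, ψ x ∈ s \ {y, ψ y} := by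
          intro x hx
          simp only [Finset.mem_sdiff, Finset.mem_insert, Finset.mem_singleton] at hx ⊢
          obtain ⟨hxs, hx2⟩ := hx
          push_neg at hx2
          refine ⟨hs x hxs, ?_⟩
          rintro (h|h)
          · apply hx2.2; rw [← hψ x, h]
          · apply hx2.1; have := congrArg ψ h; rwa [hψ, hψ] at this
        obtain ⟨t, hts, htc, hti⟩ := ih (n-2) (by omega) _ hinv hcard
          (Or.inl (by rcases he with ⟨k, hk⟩; exact ⟨k-1, by omega⟩))
        refine ⟨{y, ψ y} ∪ t, ?_, ?_, ?_⟩
        · intro z hz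
          simp only [Finset.mem_union, Finset.mem_insert, Finset.mem_singleton] at hz
          rcases hz with (h|h)|h
          · simp [h, hy]
          · simp [h, hψy]
          · exact (Finset.mem_sdiff.mp (hts h)).1
        · rw [Finset.card_union_of_disjoint, Finset.card_insert_of_notMem (by simp [Ne.symm hyy]),
            Finset.card_singleton]
          · omega
          · refine Finset.disjoint_left.mpr ?_
            intro z hz hzt
            have := Finset.mem_sdiff.mp (hts hzt)
            exact this.2 hz
        · intro x hx
          simp only [Finset.mem_union, Finset.mem_insert, Finset.mem_singleton] at hx ⊢
          rcases hx with (h|h)|h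
          · subst h; tauto
          · subst h; rw [hψ]; tauto
          · exact Or.inr (hti x h)
    · -- n odd: need fixed point
      have hfix : ∃ x ∈ s, ψ x = x := by
        rcases hpar with he | hf
        · exact absurd he (by simpa using Nat.not_even_iff_odd.mpr ho)
        · exact hf
      obtain ⟨x, hx, hxx⟩ := hfix
      have hinv : ∀ z ∈ s.erase x, ψ z ∈ s.erase x := by
        intro z hz
        rw [Finset.mem_erase] at hz ⊢
        refine ⟨?_, hs z hz.2⟩
        intro h; apply hz.1
        have := congrArg ψ h; rwa [hψ, hxx] at this
      have hcard : n - 1 ≤ (s.erase x).card := by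
        rw [Finset.card_erase_of_mem hx]; omega
      obtain ⟨t, hts, htc, hti⟩ := ih (n-1) (by omega) _ hinv hcard
        (Or.inl (by rcases ho with ⟨k, hk⟩; exact ⟨k, by omega⟩))
      refine ⟨insert x t, ?_, ?_, ?_⟩
      · intro z hz
        rcases Finset.mem_insert.mp hz with h|h
        · subst h; exact hx
        · exact (Finset.mem_erase.mp (hts h)).2
      · rw [Finset.card_insert_of_notMem (fun h => (Finset.mem_erase.mp (hts h)).1 rfl)]
        omega
      · intro z hz
        rcases Finset.mem_insert.mp hz with h|h
        · subst h; rw [hxx]; exact Finset.mem_insert_self _ _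
        · exact Finset.mem_insert_of_mem (hti z h)

lemma cay_count {G : Type*} [Group G] (S : Set G) (hS : S⁻¹ = S) (h1 : (1:G) ∉ S)
    (C : Set G) (v : G) :
    (cayley S).neighborSet v ∩ C = (fun z => z * v) '' {z | z ∈ S ∧ z * v ∈ C} := by
  ext y
  simp only [Set.mem_inter_iff, SimpleGraph.mem_neighborSet, cayley, SimpleGraph.fromRel_adj,
    Set.mem_image, Set.mem_setOf_eq]
  constructor
  · rintro ⟨⟨hne, h | h⟩, hC⟩
    · exact ⟨y * v⁻¹, ⟨h, by simpa⟩, by simp⟩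
    · refine ⟨y * v⁻¹, ⟨?_, by simpa⟩, by simp⟩
      rw [← hS, Set.mem_inv]
      simpa [mul_inv_rev] using h
  · rintro ⟨z, ⟨hzS, hzC⟩, rfl⟩
    refine ⟨⟨?_, Or.inl (by simpa)⟩, hzC⟩
    intro h
    apply h1
    have : z = 1 := by
      have := h.symm
      rwa [mul_eq_right] at this
    rwa [this] at hzS

theorem stmt4 {G : Type*} [Group G] [Fintype G] (H : Subgroup G) [H.Normal]
    (hpc : ∃ S₀ : Set G, S₀⁻¹ = S₀ ∧ (1 : G) ∉ S₀ ∧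
      IsRegularSet (cayley S₀) (H : Set G) 0 1)
    (a b : ℕ) (ha : a ≤ Nat.card H - 1) (hb : b ≤ Nat.card H)
    (hdvd : Nat.gcd 2 (Nat.card H - 1) ∣ a) :
    ∃ S : Set G, S⁻¹ = S ∧ (1 : G) ∉ S ∧
      IsRegularSet (cayley S) (H : Set G) a b := by
  classical
  obtain ⟨S₀, hS₀inv, hS₀1, _, hreg1⟩ := hpc
  set Q := G ⧸ H with hQ
  have hHfin : (H : Set G).Finite := Set.toFinite _
  set Hfin : Finset G := hHfin.toFinset with hHfinDef
  have hmemHfin : ∀ x : G, x ∈ Hfin ↔ x ∈ H := by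
    intro x; rw [hHfinDef, Set.Finite.mem_toFinset]; exact SetLike.mem_coe
  have hN : Nat.card H = ((H : Set G)).ncard := by
    rw [← Nat.card_coe_set_eq]; rfl
  have hHcard : Hfin.card = Nat.card H := by
    rw [hN, Set.ncard_eq_toFinset_card _ hHfin]
  -- the unique intersection point of S₀ with each nontrivial coset
  have huniq : ∀ q : Q, q ≠ 1 → ∃ x : G, {z : G | z ∈ S₀ ∧ (z : Q) = q} = {x} := by
    intro q hq
    obtain ⟨v, hv⟩ := QuotientGroup.mk_surjective (q⁻¹)
    have hvH : v ∉ H := by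
      intro hmem
      apply hq
      have : ((v : G) : Q) = 1 := (QuotientGroup.eq_one_iff v).mpr hmem
      rw [hv] at this
      simpa using congrArg (·⁻¹) this
    have h1 := hreg1 v hvH
    rw [cay_count S₀ hS₀inv hS₀1, Set.ncard_image_of_injective _ (mul_left_injective v)] at h1
    have hsetEq : {z : G | z ∈ S₀ ∧ z * v ∈ (H : Set G)} = {z : G | z ∈ S₀ ∧ (z : Q) = q} := by
      ext z
      simp only [Set.mem_setOf_eq, SetLike.mem_coe, and_congr_right_iff]
      intro _
      rw [← QuotientGroup.eq_one_iff, QuotientGroup.mk_mul, hv]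
      exact mul_inv_eq_one
    rw [hsetEq] at h1
    exact Set.ncard_eq_one.mp h1
  choose sfun hsfun using huniq
  set s : Q → G := fun q => if hq : q ≠ 1 then sfun q hq else 1 with hsdef
  have hs : ∀ q : Q, q ≠ 1 → s q ∈ S₀ ∧ ((s q : G) : Q) = q := by
    intro q hq
    have : sfun q hq ∈ {z : G | z ∈ S₀ ∧ (z : Q) = q} := by rw [hsfun q hq]; rfl
    simp only [hsdef]; simp only [dif_pos hq]; exact this
  have hsu : ∀ q : Q, q ≠ 1 → ∀ z : G, z ∈ S₀ → (z : Q) = q → z = s q := by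
    intro q hq z hz hzq
    have h' : z ∈ {z : G | z ∈ S₀ ∧ (z : Q) = q} := ⟨hz, hzq⟩
    rw [hsfun q hq] at h'
    simp only [hsdef]; simp only [dif_pos hq]; exact h'
  have hsinv : ∀ q : Q, q ≠ 1 → s q⁻¹ = (s q)⁻¹ := by
    intro q hq
    have hq' : q⁻¹ ≠ 1 := by simpa using hq
    refine (hsu q⁻¹ hq' (s q)⁻¹ ?_ ?_).symm
    · rw [← hS₀inv, Set.mem_inv]; simpa using (hs q hq).1
    · rw [QuotientGroup.mk_inv, (hs q hq).2]
  -- the inner set A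
  have hA : ∃ A : Finset G, (∀ x ∈ A, x ∈ H ∧ x ≠ 1) ∧ A.card = a ∧ ∀ x ∈ A, x⁻¹ ∈ A := by
    have hfin' : ((H : Set G) \ {1}).Finite := Set.toFinite _
    have hsub : ∀ x ∈ hfin'.toFinset, x ∈ H ∧ x ≠ 1 := by
      intro x hx
      rw [Set.Finite.mem_toFinset, Set.mem_diff, Set.mem_singleton_iff] at hx
      exact ⟨hx.1, hx.2⟩
    have hcard' : hfin'.toFinset.card = Nat.card H - 1 := by
      rw [← Set.ncard_eq_toFinset_card _ hfin',
        Set.ncard_diff_singleton_of_mem (by exact H.one_mem), ← hN]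
    have hinv' : ∀ x ∈ hfin'.toFinset, x⁻¹ ∈ hfin'.toFinset := by
      intro x hx
      rw [Set.Finite.mem_toFinset, Set.mem_diff, Set.mem_singleton_iff] at hx ⊢
      exact ⟨H.inv_mem hx.1, by simpa using hx.2⟩
    have hpar : Even a ∨ ∃ x ∈ hfin'.toFinset, x⁻¹ = x := by
      rcases Nat.even_or_odd (Nat.card H) with he | ho
      · right
        have : Fintype H := Fintype.ofFinite _
        have hdvd2 : 2 ∣ Fintype.card H := by
          rw [← Nat.card_eq_fintype_card]; exact he.two_dvd
        obtain ⟨x, hx⟩ := @exists_prime_orderOf_dvd_card _ _ _ 2 ⟨Nat.prime_two⟩ hdvd2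
        refine ⟨(x : G), ?_, ?_⟩
        · rw [Set.Finite.mem_toFinset, Set.mem_diff, Set.mem_singleton_iff]
          refine ⟨x.2, ?_⟩
          intro h
          have : x = 1 := Subtype.ext h
          rw [this, orderOf_one] at hx
          norm_num at hx
        · have h2 : x * x = 1 := by
            have := pow_orderOf_eq_one x
            rwa [hx, pow_two] at this
          have : x⁻¹ = x := inv_eq_of_mul_eq_one_right h2
          exact_mod_cast congrArg (Subtype.val) this
      · left
        have h2 : Nat.gcd 2 (Nat.card H - 1) = 2 := Nat.gcd_eq_left (by
          rcases ho with ⟨k, hk⟩; omega)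
        rw [h2] at hdvd
        exact (even_iff_two_dvd).mpr hdvd
    obtain ⟨A, hAs, hAc, hAi⟩ := invol_subset (fun x : G => x⁻¹) (by simp) a hfin'.toFinset
      hinv' (by rw [hcard']; exact ha) hpar
    exact ⟨A, fun x hx => hsub x (hAs hx), hAc, hAi⟩
  obtain ⟨A, hAmem, hAcard, hAinv⟩ := hA
  -- the outer family F
  obtain ⟨B, hBsub, hBcard⟩ := Finset.exists_subset_card_eq (show b ≤ Hfin.card by rw [hHcard]; exact hb)
  have hBH : ∀ x ∈ B, x ∈ H := fun x hx => (hmemHfin x).mp (hBsub hx)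
  have hΨ : ∀ q : Q, q ≠ 1 → q = q⁻¹ → ∃ t : Finset G, (∀ x ∈ t, x ∈ H) ∧ t.card = b ∧
      ∀ f ∈ t, (s q)⁻¹ * f⁻¹ * (s q) ∈ t := by
    intro q hq hqi
    have hss : s q * s q = 1 := by
      have h := hsinv q hq
      rw [← hqi] at h
      nth_rewrite 2 [h]
      simp
    have hinvol : ∀ x : G, (fun f => (s q)⁻¹ * f⁻¹ * (s q)) ((fun f => (s q)⁻¹ * f⁻¹ * (s q)) x) = x := by
      intro x
      have : (s q)⁻¹ * ((s q)⁻¹ * x⁻¹ * (s q))⁻¹ * (s q)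
          = (s q * s q)⁻¹ * x * (s q * s q) := by group
      simp only [this, hss]; simp
    have hinvar : ∀ x ∈ Hfin, (s q)⁻¹ * x⁻¹ * (s q) ∈ Hfin := by
      intro x hx
      rw [hmemHfin] at hx ⊢
      have := Subgroup.Normal.conj_mem ‹H.Normal› x⁻¹ (H.inv_mem hx) (s q)⁻¹
      simpa using this
    obtain ⟨t, hts, htc, hti⟩ := invol_subset _ hinvol b Hfin hinvar
      (by rw [hHcard]; exact hb)
      (Or.inr ⟨1, (hmemHfin 1).mpr H.one_mem, by simp [hss]⟩)
    exact ⟨t, fun x hx => (hmemHfin x).mp (hts hx), htc, hti⟩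
  choose Ψ hΨ₁ hΨ₂ hΨ₃ using hΨ
  set r : Q → Q → Prop := WellOrderingRel with hr
  have hrtri : ∀ p q : Q, p ≠ q → r p q ∨ r q p := by
    intro p q hne
    rcases @trichotomous Q r (@IsWellOrder.toTrichotomous Q r WellOrderingRel.isWellOrder) p q with h|h|h
    · exact Or.inl h
    · exact absurd h hne
    · exact Or.inr h
  have hrasymm : ∀ p q : Q, r p q → ¬ r q p := by
    intro p q h1 h2
    have h3 : r p p := @IsTrans.trans Q r (haveI := @WellOrderingRel.isWellOrder Q; inferInstance) _ _ _ h1 h2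
    have h4 := (@WellOrderingRel.isWellOrder Q).wf.isIrrefl
    exact h4.irrefl p h3
  set F : Q → Finset G := fun q =>
    if h : q ≠ 1 ∧ q = q⁻¹ then Ψ q h.1 h.2
    else if r q q⁻¹ then B
    else B.image (fun f => (s q) * f⁻¹ * (s q)⁻¹) with hFdef
  have hFH : ∀ q : Q, ∀ x ∈ F q, x ∈ H := by
    intro q x hx
    simp only [hFdef] at hx
    by_cases h : q ≠ 1 ∧ q = q⁻¹
    · rw [dif_pos h] at hx; exact hΨ₁ q h.1 h.2 x hx
    · rw [dif_neg h] at hx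
      by_cases h2 : r q q⁻¹
      · rw [if_pos h2] at hx; exact hBH x hx
      · rw [if_neg h2] at hx
        obtain ⟨f, hf, rfl⟩ := Finset.mem_image.mp hx
        have := Subgroup.Normal.conj_mem ‹H.Normal› f⁻¹ (H.inv_mem (hBH f hf)) (s q)
        exact this
  have hFcard : ∀ q : Q, (F q).card = b := by
    intro q
    simp only [hFdef]
    by_cases h : q ≠ 1 ∧ q = q⁻¹
    · rw [dif_pos h]; exact hΨ₂ q h.1 h.2
    · rw [dif_neg h]
      by_cases h2 : r q q⁻¹
      · rw [if_pos h2]; exact hBcard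
      · rw [if_neg h2]
        rw [Finset.card_image_of_injective _ (by
          intro x y hxy
          simpa using hxy), hBcard]
  have hFcons : ∀ q : Q, q ≠ 1 → ∀ f ∈ F q, (s q)⁻¹ * f⁻¹ * (s q) ∈ F q⁻¹ := by
    intro q hq f hf
    by_cases hqi : q = q⁻¹
    · have h : q ≠ 1 ∧ q = q⁻¹ := ⟨hq, hqi⟩
      simp only [hFdef] at hf ⊢
      rw [dif_pos h] at hf
      have h' : q⁻¹ ≠ 1 ∧ q⁻¹ = (q⁻¹)⁻¹ := by constructor <;> rw [← hqi] <;> [exact hq; exact hqi]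
      rw [dif_pos h']
      have := hΨ₃ q h.1 h.2 f hf
      -- Ψ q⁻¹ h'.1 h'.2 vs Ψ q h.1 h.2 : rewrite along hqi
      revert h'
      rw [← hqi]
      intro h'
      have hse : s q⁻¹ = s q := by rw [← hqi]
      exact this
    · simp only [hFdef] at hf ⊢
      have h1 : ¬ (q ≠ 1 ∧ q = q⁻¹) := by tauto
      have hq' : q⁻¹ ≠ 1 := by simpa using hq
      have h1' : ¬ (q⁻¹ ≠ 1 ∧ q⁻¹ = (q⁻¹)⁻¹) := by
        rw [inv_inv]; intro hh; exact hqi hh.2.symm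
      rw [dif_neg h1] at hf
      rw [dif_neg h1']
      rcases hrtri q q⁻¹ hqi with hlt | hgt
      · rw [if_pos hlt] at hf
        have : ¬ r q⁻¹ (q⁻¹)⁻¹ := by rw [inv_inv]; exact hrasymm _ _ hlt
        rw [if_neg this]
        refine Finset.mem_image.mpr ⟨f, hf, ?_⟩
        rw [hsinv q hq]
        simp [mul_assoc]
      · have hnlt : ¬ r q q⁻¹ := hrasymm _ _ hgt
        rw [if_neg hnlt] at hf
        have : r q⁻¹ (q⁻¹)⁻¹ := by rw [inv_inv]; exact hgt
        rw [if_pos this]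
        obtain ⟨g, hg, rfl⟩ := Finset.mem_image.mp hf
        have : (s q)⁻¹ * (s q * g⁻¹ * (s q)⁻¹)⁻¹ * s q = g := by group
        rw [this]; exact hg
  -- the connection set
  set Sout : Set G := {x : G | ((x : G) : Q) ≠ 1 ∧ x * (s ((x : G) : Q))⁻¹ ∈ F ((x : G) : Q)} with hSoutDef
  set S : Set G := ↑A ∪ Sout with hSdef
  have hSoutH : ∀ x ∈ Sout, x ∉ H := by
    intro x hx hxH
    exact hx.1 ((QuotientGroup.eq_one_iff x).mpr hxH)
  have hS1 : (1 : G) ∉ S := by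
    rintro (h | h)
    · exact (hAmem 1 h).2 rfl
    · exact hSoutH 1 h H.one_mem
  have hSsymm : ∀ x ∈ S, x⁻¹ ∈ S := by
    rintro x (h | h)
    · exact Or.inl (by exact_mod_cast hAinv x h)
    · right
      obtain ⟨hx1, hxF⟩ := h
      set q : Q := ((x : G) : Q) with hqdef
      have hq' : (q : Q)⁻¹ ≠ 1 := by simpa using hx1
      have hπ : ((x⁻¹ : G) : Q) = q⁻¹ := by rw [QuotientGroup.mk_inv, hqdef]
      refine ⟨by rw [hπ]; exact hq', ?_⟩
      rw [hπ, hsinv q hx1, inv_inv]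
      have := hFcons q hx1 (x * (s q)⁻¹) hxF
      have heq : (s q)⁻¹ * (x * (s q)⁻¹)⁻¹ * s q = x⁻¹ * s q := by group
      rwa [heq] at this
  have hSinv : S⁻¹ = S := by
    ext x
    rw [Set.mem_inv]
    constructor
    · intro h
      have := hSsymm x⁻¹ h
      rwa [inv_inv] at this
    · exact fun h => hSsymm x h
  refine ⟨S, hSinv, hS1, ?_, ?_⟩
  · -- inner count
    intro v hv
    rw [cay_count S hSinv hS1, Set.ncard_image_of_injective _ (mul_left_injective v)]
    have : {z : G | z ∈ S ∧ z * v ∈ (H : Set G)} = (↑A : Set G) := by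
      ext z
      simp only [Set.mem_setOf_eq, SetLike.mem_coe]
      constructor
      · rintro ⟨hzS | hzS, hzv⟩
        · exact hzS
        · exfalso
          apply hSoutH z hzS
          have : z * v * v⁻¹ ∈ H := H.mul_mem hzv (H.inv_mem hv)
          simpa using this
      · intro hz
        have hzH := (hAmem z hz).1
        exact ⟨Or.inl hz, H.mul_mem hzH hv⟩
    rw [this, Set.ncard_coe_finset, hAcard]
  · -- outer count
    intro v hv
    rw [cay_count S hSinv hS1, Set.ncard_image_of_injective _ (mul_left_injective v)]
    set q : Q := ((v : G) : Q)⁻¹ with hqdef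
    have hq1 : q ≠ 1 := by
      rw [hqdef]
      simp only [ne_eq, inv_eq_one]
      exact fun h => hv ((QuotientGroup.eq_one_iff v).mp h)
    have : {z : G | z ∈ S ∧ z * v ∈ (H : Set G)} = (fun f => f * s q) '' ↑(F q) := by
      ext z
      simp only [Set.mem_setOf_eq, SetLike.mem_coe, Set.mem_image, Finset.mem_coe]
      constructor
      · rintro ⟨hzS | hzS, hzv⟩
        · exfalso
          apply hv
          have hzH := (hAmem z hzS).1
          have : z⁻¹ * (z * v) ∈ H := H.mul_mem (H.inv_mem hzH) hzv
          simpa using this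
        · obtain ⟨hz1, hzF⟩ := hzS
          have hπz : ((z : G) : Q) = q := by
            have h1 : (((z * v : G)) : Q) = 1 := (QuotientGroup.eq_one_iff _).mpr hzv
            rw [QuotientGroup.mk_mul] at h1
            rw [hqdef]
            exact eq_inv_of_mul_eq_one_left h1
          refine ⟨z * (s q)⁻¹, ?_, by group⟩
          rw [← hπz]; exact hzF
      · rintro ⟨f, hf, rfl⟩
        have hfH : f ∈ H := hFH q f hf
        have hπ : ((f * s q : G) : Q) = q := by
          rw [QuotientGroup.mk_mul, (hs q hq1).2, (QuotientGroup.eq_one_iff f).mpr hfH, one_mul]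
        constructor
        · right
          refine ⟨by rw [hπ]; exact hq1, ?_⟩
          rw [hπ]
          simpa using hf
        · rw [← QuotientGroup.eq_one_iff, QuotientGroup.mk_mul, hπ, hqdef]
          simp
    rw [this, Set.ncard_image_of_injective _ (mul_left_injective (s q)),
      Set.ncard_coe_finset, hFcard]
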